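/- The integral (1/π) ∫_0^∞ dt/√(t⁴+1) equals (4/π^{3/2}) Γ(5/4)². -/

import Mathlib

open Real MeasureTheory Set

lemma beta_quarter :
    ∫ x in (0:ℝ)..1, x ^ (-3/4 : ℝ) * (1 - x) ^ (-3/4 : ℝ)
      = Real.Gamma (1/4) ^ 2 / Real.Gamma (1/2) := by
  have h := Complex.Gamma_mul_Gamma_eq_betaIntegral
    (s := (1/4 : ℂ)) (t := (1/4 : ℂ)) (by norm_num) (by norm_num)
  rw [Complex.betaIntegral] at h
  have hcong : ∀ x ∈ Set.uIcc (0:ℝ) 1,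
      ((x:ℂ) ^ ((1/4:ℂ) - 1) * ((1:ℂ) - x) ^ ((1/4:ℂ) - 1))
        = ((x ^ (-3/4 : ℝ) * (1 - x) ^ (-3/4 : ℝ) : ℝ) : ℂ) := by
    intro x hx
    rw [Set.uIcc_of_le zero_le_one] at hx
    push_cast
    rw [Complex.ofReal_cpow hx.1, Complex.ofReal_cpow (by linarith [hx.2] : (0:ℝ) ≤ 1 - x)]
    push_cast
    norm_num
  rw [intervalIntegral.integral_congr hcong, intervalIntegral.integral_ofReal] at h
  have h14 : (1/4 : ℂ) = ((1/4 : ℝ) : ℂ) := by norm_num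
  have h12 : ((1/4 : ℝ) : ℂ) + ((1/4 : ℝ) : ℂ) = ((1/2 : ℝ) : ℂ) := by norm_num
  rw [h14, h12, Complex.Gamma_ofReal, Complex.Gamma_ofReal] at h
  have h' : Real.Gamma (1/4) * Real.Gamma (1/4)
      = Real.Gamma (1/2) * ∫ x in (0:ℝ)..1, x ^ (-3/4 : ℝ) * (1 - x) ^ (-3/4 : ℝ) := by
    exact_mod_cast h
  have hΓ : Real.Gamma (1/2) ≠ 0 := by
    rw [Real.Gamma_one_half_eq]; positivity
  field_simp
  rw [sq]; linarith [h']

lemma beta_Ioi :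
    ∫ x in Set.Ioi (0:ℝ), x ^ (-3/4 : ℝ) * (x + 1) ^ (-1/2 : ℝ)
      = Real.Gamma (1/4) ^ 2 / Real.Gamma (1/2) := by
  set f : ℝ → ℝ := fun y => y / (1 - y) with hf
  have hderiv : ∀ y ∈ Set.Ioo (0:ℝ) 1,
      HasDerivWithinAt f (((1 - y)^2)⁻¹) (Set.Ioo (0:ℝ) 1) y := by
    intro y hy
    have h1 : (1:ℝ) - y ≠ 0 := by simp only [Set.mem_Ioo] at hy; intro h; linarith [hy.2]
    have := (hasDerivAt_id y).div ((hasDerivAt_id y).const_sub 1) h1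
    exact this.hasDerivWithinAt.congr_deriv (by simp only [id]; field_simp; ring)
  have hinj : Set.InjOn f (Set.Ioo (0:ℝ) 1) := by
    intro a ha b hb hab
    simp only [Set.mem_Ioo] at ha hb
    have h1 : (1:ℝ) - a ≠ 0 := by intro h; linarith [ha.2]
    have h2 : (1:ℝ) - b ≠ 0 := by intro h; linarith [hb.2]
    simp only [hf] at hab
    field_simp at hab
    nlinarith [hab]
  have himg : f '' Set.Ioo (0:ℝ) 1 = Set.Ioi (0:ℝ) := by
    ext t
    constructor
    · rintro ⟨y, hy, rfl⟩
      simp only [Set.mem_Ioo] at hy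
      exact div_pos hy.1 (by linarith [hy.2])
    · intro ht
      simp only [Set.mem_Ioi] at ht
      refine ⟨t / (1 + t), ⟨div_pos ht (by linarith), ?_⟩, ?_⟩
      · rw [div_lt_one (by linarith)]; linarith
      · simp only [hf]
        have : (1:ℝ) + t ≠ 0 := by positivity
        field_simp
        ring
  have key := integral_image_eq_integral_abs_deriv_smul measurableSet_Ioo hderiv hinj
    (fun x => x ^ (-3/4 : ℝ) * (x + 1) ^ (-1/2 : ℝ))
  rw [himg] at key
  rw [key]
  have hcong : ∀ y ∈ Set.Ioo (0:ℝ) 1,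
      |((1 - y)^2)⁻¹| • ((f y) ^ (-3/4 : ℝ) * (f y + 1) ^ (-1/2 : ℝ))
        = y ^ (-3/4 : ℝ) * (1 - y) ^ (-3/4 : ℝ) := by
    intro y hy
    simp only [Set.mem_Ioo] at hy
    have hy0 : 0 < y := hy.1
    have hu : 0 < 1 - y := by linarith [hy.2]
    have h1 : f y + 1 = (1 - y)⁻¹ := by
      simp only [hf]; field_simp
      ring
    rw [h1, smul_eq_mul, abs_of_pos (by positivity)]
    simp only [hf]
    rw [Real.div_rpow hy0.le hu.le, Real.inv_rpow hu.le]
    rw [show ((1 - y)^2)⁻¹ = (1-y) ^ (-2 : ℝ) by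
      rw [Real.rpow_neg hu.le, Real.rpow_two]]
    rw [show ((1-y) ^ ((-1:ℝ)/2))⁻¹ = (1-y) ^ ((1:ℝ)/2) by
      rw [← Real.rpow_neg hu.le]; norm_num]
    rw [div_eq_mul_inv, ← Real.rpow_neg hu.le]
    rw [mul_comm (y ^ (-3/4 : ℝ)) _, mul_assoc, mul_comm ((1-y) ^ (-(-3/4) : ℝ)) _, ← mul_assoc, mul_assoc, mul_assoc]
    rw [← Real.rpow_add hu, mul_left_comm, ← Real.rpow_add hu]
    norm_num
  rw [setIntegral_congr_fun measurableSet_Ioo hcong, ← integral_Ioc_eq_integral_Ioo,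
    ← intervalIntegral.integral_of_le zero_le_one]
  exact beta_quarter

theorem integral_inv_sqrt_quartic :
    (1 / Real.pi) * ∫ t in Set.Ioi (0:ℝ), 1 / Real.sqrt (t ^ 4 + 1)
      = 4 / Real.pi ^ ((3:ℝ)/2) * Real.Gamma (5 / 4) ^ 2 := by
  have step1 : ∫ t in Set.Ioi (0:ℝ), 1 / Real.sqrt (t ^ 4 + 1)
      = ∫ t in Set.Ioi (0:ℝ), (t ^ 4 + 1) ^ (-(1:ℝ)/2) := by
    refine setIntegral_congr_fun measurableSet_Ioi fun t ht => ?_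
    have h : (0:ℝ) < t ^ 4 + 1 := by positivity
    rw [Real.sqrt_eq_rpow, one_div, ← Real.rpow_neg h.le]
    norm_num
  have step2 : (∫ x in Set.Ioi (0:ℝ),
        ((1/4 : ℝ) * x ^ ((1/4 : ℝ) - 1)) • (((x ^ ((1:ℝ)/4)) ^ 4 + 1) ^ (-(1:ℝ)/2)))
      = ∫ t in Set.Ioi (0:ℝ), (t ^ 4 + 1) ^ (-(1:ℝ)/2) :=
    integral_comp_rpow_Ioi_of_pos (g := fun t => (t ^ 4 + 1) ^ (-(1:ℝ)/2)) (by norm_num)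
  have step3 : (∫ x in Set.Ioi (0:ℝ),
        ((1/4 : ℝ) * x ^ ((1/4 : ℝ) - 1)) • (((x ^ ((1:ℝ)/4)) ^ 4 + 1) ^ (-(1:ℝ)/2)))
      = ∫ x in Set.Ioi (0:ℝ), (1/4 : ℝ) * (x ^ (-3/4 : ℝ) * (x + 1) ^ (-1/2 : ℝ)) := by
    refine setIntegral_congr_fun measurableSet_Ioi fun x hx => ?_
    have hx0 : (0:ℝ) < x := hx
    have hpow : (x ^ ((1:ℝ)/4)) ^ 4 = x := by
      rw [← Real.rpow_natCast (x ^ ((1:ℝ)/4)) 4, ← Real.rpow_mul hx0.le]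
      norm_num
    rw [hpow, smul_eq_mul]
    norm_num
    ring
  rw [step1, ← step2, step3, integral_const_mul, beta_Ioi]
  have hΓ : Real.Gamma (5/4) = (1/4) * Real.Gamma (1/4) := by
    have := Real.Gamma_add_one (s := (1/4 : ℝ)) (by norm_num)
    rw [show (1/4 : ℝ) + 1 = 5/4 by norm_num] at this
    exact this
  rw [Real.Gamma_one_half_eq, hΓ]
  have hπ : Real.pi ^ ((3:ℝ)/2) = Real.pi * Real.sqrt Real.pi := by
    rw [show ((3:ℝ)/2) = 1 + 1/2 by norm_num, Real.rpow_add Real.pi_pos, Real.rpow_one,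
      ← Real.sqrt_eq_rpow]
  rw [hπ]

  have h1 : Real.sqrt Real.pi ≠ 0 := by positivity
  have h2 : Real.pi ≠ 0 := Real.pi_ne_zero
  field_simp
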